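/- Let k ≥ 2 and let X be a word with content {x_1,...,x_n} in which each variable occurs at least k−1 times. Then the monoid L_{2k+1}^1 = ⟨a,b,1 | aa=a, bb=b, (ab)^k a = 0⟩ satisfies the identity x_1 x_2 ··· x_n · X · x_n x_{n−1} ··· x_1 ≈ x_1 x_2 ··· x_n · reverse(X) · x_n x_{n−1} ··· x_1. -/

import Mathlib

/-- The alternating word abab⋯ of length ℓ (a = 0, b = 1 in `Fin 3`). -/
def altWord (ℓ : ℕ) : FreeMonoid (Fin 3) :=
  FreeMonoid.ofList ((List.range ℓ).map (fun i => if i % 2 = 0 then (0 : Fin 3) else 1))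

/-- Defining relations of the Lee monoid L_ℓ^1: generators a = 0, b = 1, zero = 2,
relations aa = a, bb = b, abab⋯ (length ℓ) = 0, and 0 is absorbing. -/
def leeRel (ℓ : ℕ) : FreeMonoid (Fin 3) → FreeMonoid (Fin 3) → Prop := fun u v =>
  (u = .of 0 * .of 0 ∧ v = .of 0) ∨
  (u = .of 1 * .of 1 ∧ v = .of 1) ∨
  (u = altWord ℓ ∧ v = .of 2) ∨
  (u = .of 2 * .of 0 ∧ v = .of 2) ∨
  (u = .of 0 * .of 2 ∧ v = .of 2) ∨
  (u = .of 2 * .of 1 ∧ v = .of 2) ∨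
  (u = .of 1 * .of 2 ∧ v = .of 2) ∨
  (u = .of 2 * .of 2 ∧ v = .of 2)

/-- The Lee monoid L_ℓ^1 (with adjoined identity 1, the empty word).
For ℓ = 2 * k + 1 this is L_{2k+1}^1 = ⟨a,b,1 ∣ aa=a, bb=b, (ab)^k a = 0⟩. -/
def Lee (ℓ : ℕ) : Type := (conGen (leeRel ℓ)).Quotient

instance (ℓ : ℕ) : Monoid (Lee ℓ) := Con.monoid _

/-- The word x₁x₂⋯xₙ. -/
def ascFin (n : ℕ) : List (Fin n) := List.ofFn id




open List

/-! Combinatorial lemmas about destutter with (· ≠ ·) -/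

abbrev NE3 : Fin 3 → Fin 3 → Prop := (· ≠ ·)

lemma destutter'_cons_head (l : List (Fin 3)) (a : Fin 3) :
    ∃ t, l.destutter' NE3 a = a :: t := by
  induction l generalizing a with
  | nil => exact ⟨[], rfl⟩
  | cons b l ih =>
    rw [destutter'_cons]
    split
    · exact ⟨_, rfl⟩
    · exact ih a

lemma head?_destutter (u : List (Fin 3)) : (u.destutter NE3).head? = u.head? := by
  cases u with
  | nil => rfl
  | cons a l =>
    rw [destutter_cons']
    obtain ⟨t, ht⟩ := destutter'_cons_head l a
    rw [ht]; rfl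

lemma destutter_ne_cons_cons (a b : Fin 3) (l : List (Fin 3)) :
    (a :: b :: l).destutter NE3 = if a = b then (b :: l).destutter NE3
      else a :: (b :: l).destutter NE3 := by
  rw [destutter_cons_cons]
  by_cases h : a = b
  · subst h; simp [destutter_cons']
  · simp [h, destutter_cons']

lemma getLast?_destutter (u : List (Fin 3)) :
    (u.destutter NE3).getLast? = u.getLast? := by
  induction u with
  | nil => rfl
  | cons a l ih =>
    cases l with
    | nil => rfl
    | cons b t =>
      rw [destutter_ne_cons_cons]
      by_cases h : a = b
      · rw [if_pos h, ih, getLast?_cons_cons]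
      · rw [if_neg h]
        obtain ⟨t', ht'⟩ := destutter'_cons_head t b
        rw [destutter_cons'] at ih ⊢
        rw [ht'] at ih ⊢
        rw [getLast?_cons_cons, ih, getLast?_cons_cons]

lemma mem_destutter_of_mem {x : Fin 3} {u : List (Fin 3)} (h : x ∈ u) :
    x ∈ u.destutter NE3 := by
  induction u with
  | nil => simp at h
  | cons a l ih =>
    cases l with
    | nil => simpa using h
    | cons b t =>
      rw [destutter_ne_cons_cons]
      by_cases hab : a = b
      · rw [if_pos hab]
        rcases mem_cons.mp h with rfl | h'
        · exact ih (by simp [hab])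
        · exact ih h'
      · rw [if_neg hab]
        rcases mem_cons.mp h with rfl | h'
        · exact mem_cons_self
        · exact mem_cons_of_mem _ (ih h')

lemma destutter_append_singleton (u : List (Fin 3)) (c : Fin 3) :
    (u ++ [c]).destutter NE3 =
      if u.getLast? = some c then u.destutter NE3 else u.destutter NE3 ++ [c] := by
  induction u with
  | nil => simp [destutter_singleton]
  | cons a l ih =>
    cases l with
    | nil =>
      by_cases h : a = c
      · subst h
        simp [destutter_ne_cons_cons, destutter_singleton]
      · simp [destutter_ne_cons_cons, h, destutter_singleton, Ne.symm]
    | cons b t =>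
      have hl : (a :: b :: t).getLast? = (b :: t).getLast? := getLast?_cons_cons ..
      rw [hl, cons_append, cons_append, destutter_ne_cons_cons, ← cons_append, ih,
        destutter_ne_cons_cons]
      split_ifs <;> simp

lemma destutter_reverse (u : List (Fin 3)) :
    u.reverse.destutter NE3 = (u.destutter NE3).reverse := by
  induction u with
  | nil => rfl
  | cons a t ih =>
    rw [reverse_cons, destutter_append_singleton, getLast?_reverse, ih]
    cases t with
    | nil => simp [destutter_singleton]
    | cons b t' =>
      rw [destutter_ne_cons_cons]
      by_cases hab : a = b
      · rw [if_pos hab, if_pos (by simp [hab])]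
      · have hba : ¬((b :: t').head? = some a) := by
          simp only [head?_cons, Option.some.injEq]
          exact fun h => hab h.symm
        rw [if_neg hab, if_neg hba, reverse_cons]

lemma chain'_sublist_aux {v : List (Fin 3)} {a : Fin 3} {t : List (Fin 3)}
    (hs : v <+ a :: a :: t) (hc : v.Chain' NE3) : v <+ a :: t := by
  cases hs with
  | cons _ h => exact h
  | cons_cons _ h =>
    rename_i v'
    cases h with
    | cons _ h2 => exact h2.cons_cons a
    | cons_cons _ h2 =>
      exfalso
      exact (isChain_cons_cons.mp hc).1 rfl

lemma length_le_destutter {u v : List (Fin 3)} (hs : v <+ u) (hc : v.Chain' NE3) :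
    v.length ≤ (u.destutter NE3).length := by
  induction u generalizing v with
  | nil => simp [sublist_nil.mp hs]
  | cons a t ih =>
    cases t with
    | nil =>
      rw [destutter_singleton]
      simpa using hs.length_le
    | cons b t' =>
      rw [destutter_ne_cons_cons]
      by_cases hab : a = b
      · rw [if_pos hab]
        subst hab
        exact ih (chain'_sublist_aux hs hc) hc
      · rw [if_neg hab, length_cons]
        cases hs with
        | cons _ h => exact (ih h hc).trans (Nat.le_succ _)
        | cons_cons _ h =>
          rename_i v'
          have := ih h (hc.tail)
          simpa using Nat.succ_le_succ this
/-! altFrom: alternating binary words -/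

def altFrom (s L : ℕ) : List (Fin 3) :=
  (List.range L).map (fun i => if (i + s) % 2 = 0 then (0 : Fin 3) else 1)

lemma altFrom_length (s L : ℕ) : (altFrom s L).length = L := by
  simp [altFrom]

lemma altFrom_congr {s s' : ℕ} (L : ℕ) (h : s % 2 = s' % 2) : altFrom s L = altFrom s' L := by
  unfold altFrom
  apply List.map_congr_left
  intro i _
  have : (i + s) % 2 = (i + s') % 2 := by omega
  rw [this]

lemma altFrom_cons (s L : ℕ) :
    altFrom s (L + 1) = (if s % 2 = 0 then (0 : Fin 3) else 1) :: altFrom (s + 1) L := by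
  unfold altFrom
  rw [List.range_succ_eq_map]
  simp only [List.map_cons, List.map_map, Nat.zero_add]
  congr 1
  apply List.map_congr_left
  intro i _
  have : (Nat.succ i + s) % 2 = (i + (s + 1)) % 2 := by omega
  simp only [Function.comp_apply, this]

lemma altFrom_snoc (s L : ℕ) :
    altFrom s (L + 1) = altFrom s L ++ [if (L + s) % 2 = 0 then (0 : Fin 3) else 1] := by
  unfold altFrom
  rw [List.range_succ, List.map_append, List.map_singleton]

lemma altFrom_append (s p q : ℕ) :
    altFrom s (p + q) = altFrom s p ++ altFrom (s + p) q := by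
  unfold altFrom
  rw [List.range_add, List.map_append, List.map_map]
  congr 1
  apply List.map_congr_left
  intro i _
  have : (p + i + s) % 2 = (i + (s + p)) % 2 := by omega
  simp only [Function.comp_apply, this]

lemma altFrom_getElem (s L i : ℕ) (h : i < (altFrom s L).length) :
    (altFrom s L)[i] = if (i + s) % 2 = 0 then (0 : Fin 3) else 1 := by
  simp [altFrom]

lemma altFrom_reverse (s L : ℕ) : (altFrom s L).reverse = altFrom (L - 1 + s) L := by
  apply List.ext_getElem
  · simp [altFrom_length]
  · intro i h1 h2
    rw [List.getElem_reverse, altFrom_getElem, altFrom_getElem]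
    have hi : i < L := by simpa [altFrom_length] using h2
    have hlen : (altFrom s L).length = L := altFrom_length s L
    rw [hlen]
    have : (L - 1 - i + s) % 2 = (i + (L - 1 + s)) % 2 := by omega
    rw [this]

lemma altFrom_chain' (s L : ℕ) : (altFrom s L).Chain' NE3 := by
  induction L generalizing s with
  | zero => simp [altFrom, Chain']
  | succ L ih =>
    rw [altFrom_cons]
    cases L with
    | zero => simp [altFrom, Chain']
    | succ L' =>
      rw [altFrom_cons]
      refine List.IsChain.cons_cons ?_ (by rw [← altFrom_cons]; exact ih _)
      have : (s + 1) % 2 ≠ s % 2 := by omega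
      split_ifs <;> simp_all <;> omega
lemma fin3_cases (x : Fin 3) : x = 0 ∨ x = 1 ∨ x = 2 := by fin_cases x <;> simp

lemma binary_chain_eq_altFrom {d : List (Fin 3)} (hc : d.Chain' NE3) (h2 : (2 : Fin 3) ∉ d) :
    ∃ s, d = altFrom s d.length := by
  induction d with
  | nil => exact ⟨0, rfl⟩
  | cons x t ih =>
    obtain ⟨s, hs⟩ := ih hc.tail (fun h => h2 (List.mem_cons_of_mem _ h))
    cases t with
    | nil =>
      rcases fin3_cases x with rfl | rfl | rfl
      · exact ⟨0, by decide⟩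
      · exact ⟨1, by decide⟩
      · exact absurd (List.mem_singleton_self _) h2
    | cons y t' =>
      have hxy : x ≠ y := (List.isChain_cons_cons.mp hc).1
      have hx2 : x ≠ 2 := fun h => h2 (by simp [h])
      have hy : y = if s % 2 = 0 then (0 : Fin 3) else 1 := by
        have := hs
        rw [show (y :: t').length = t'.length + 1 from rfl, altFrom_cons] at this
        exact (List.cons.injEq _ _ _ _ ▸ this).1
      have hx : x = if (s + 1) % 2 = 0 then (0 : Fin 3) else 1 := by
        subst hy
        rcases Nat.mod_two_eq_zero_or_one s with h | h
        · simp only [h, if_pos] at hxy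
          rw [show (s + 1) % 2 = 1 by omega]
          rcases fin3_cases x with rfl | rfl | rfl
          · exact absurd rfl hxy
          · simp
          · exact absurd rfl hx2
        · simp only [h, if_neg, one_ne_zero] at hxy
          rw [show (s + 1) % 2 = 0 by omega]
          rcases fin3_cases x with rfl | rfl | rfl
          · simp
          · exact absurd rfl hxy
          · exact absurd rfl hx2
      refine ⟨s + 1, ?_⟩
      rw [show (x :: y :: t').length = (y :: t').length + 1 from rfl, altFrom_cons, ← hx,
        altFrom_congr (s := s + 1 + 1) (s' := s) _ (by omega), ← hs]

lemma altFrom_infix (k s L : ℕ) (h : (2*k+1 ≤ L ∧ s % 2 = 0) ∨ 2*k+2 ≤ L) :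
    altFrom 0 (2*k+1) <:+: altFrom s L := by
  by_cases hs : s % 2 = 0
  · have hL : 2*k+1 ≤ L := by rcases h with ⟨h, _⟩ | h <;> omega
    have key : altFrom s L = altFrom 0 (2*k+1) ++ altFrom (s + (2*k+1)) (L - (2*k+1)) := by
      conv_lhs => rw [show L = (2*k+1) + (L - (2*k+1)) by omega]
      rw [altFrom_append]
      congr 1
      exact altFrom_congr _ (by omega)
    rw [key]
    exact (List.prefix_append _ _).isInfix
  · have hL : 2*k+2 ≤ L := by
      rcases h with ⟨_, h⟩ | h
      · exact absurd h hs
      · exact h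
    have key : altFrom s L
        = altFrom s 1 ++ (altFrom 0 (2*k+1) ++ altFrom (s + 1 + (2*k+1)) (L - (2*k+2))) := by
      conv_lhs => rw [show L = 1 + ((2*k+1) + (L - (2*k+2))) by omega]
      rw [altFrom_append, altFrom_append]
      congr 2
      exact altFrom_congr _ (by omega)
    rw [key]
    exact ⟨altFrom s 1, altFrom (s + 1 + (2*k+1)) (L - (2*k+2)), by simp⟩
/-! Normal form and congruence lemmas -/

def nfL (k : ℕ) (u : List (Fin 3)) : List (Fin 3) :=
  if (2 : Fin 3) ∈ u.destutter NE3 then [2]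
  else if altFrom 0 (2*k+1) <:+: u.destutter NE3 then [2]
  else u.destutter NE3

abbrev leeCon (k : ℕ) : Con (FreeMonoid (Fin 3)) := conGen (leeRel (2*k+1))

lemma con_sq (k : ℕ) (x : Fin 3) : leeCon k (.ofList [x, x]) (.ofList [x]) := by
  fin_cases x
  · exact ConGen.Rel.of _ _ (Or.inl ⟨rfl, rfl⟩)
  · exact ConGen.Rel.of _ _ (Or.inr (Or.inl ⟨rfl, rfl⟩))
  · exact ConGen.Rel.of _ _ (Or.inr (Or.inr (Or.inr (Or.inr (Or.inr (Or.inr (Or.inr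
      ⟨rfl, rfl⟩)))))))

lemma con_abs_left (k : ℕ) (x : Fin 3) : leeCon k (.of x * .of 2) (.of 2) := by
  fin_cases x
  · exact ConGen.Rel.of _ _ (Or.inr (Or.inr (Or.inr (Or.inr (Or.inl ⟨rfl, rfl⟩)))))
  · exact ConGen.Rel.of _ _ (Or.inr (Or.inr (Or.inr (Or.inr (Or.inr (Or.inr (Or.inl
      ⟨rfl, rfl⟩)))))))
  · exact ConGen.Rel.of _ _ (Or.inr (Or.inr (Or.inr (Or.inr (Or.inr (Or.inr (Or.inr
      ⟨rfl, rfl⟩)))))))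

lemma con_abs_right (k : ℕ) (x : Fin 3) : leeCon k (.of 2 * .of x) (.of 2) := by
  fin_cases x
  · exact ConGen.Rel.of _ _ (Or.inr (Or.inr (Or.inr (Or.inl ⟨rfl, rfl⟩))))
  · exact ConGen.Rel.of _ _ (Or.inr (Or.inr (Or.inr (Or.inr (Or.inr (Or.inl ⟨rfl, rfl⟩))))))
  · exact ConGen.Rel.of _ _ (Or.inr (Or.inr (Or.inr (Or.inr (Or.inr (Or.inr (Or.inr
      ⟨rfl, rfl⟩)))))))

lemma con_two_right (k : ℕ) (u : List (Fin 3)) :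
    leeCon k (.of 2 * .ofList u) (.of 2) := by
  induction u with
  | nil => rw [FreeMonoid.ofList_nil, mul_one]; exact (leeCon k).refl _
  | cons x t ih =>
    rw [FreeMonoid.ofList_cons, ← mul_assoc]
    exact ((leeCon k).mul (con_abs_right k x) ((leeCon k).refl _)).trans ih

lemma con_two_left (k : ℕ) (u : List (Fin 3)) :
    leeCon k (.ofList u * .of 2) (.of 2) := by
  induction u with
  | nil => rw [FreeMonoid.ofList_nil, one_mul]; exact (leeCon k).refl _
  | cons x t ih =>
    rw [FreeMonoid.ofList_cons, mul_assoc]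
    exact (((leeCon k).mul ((leeCon k).refl (FreeMonoid.of x)) ih)).trans (con_abs_left k x)

lemma con_mem_two (k : ℕ) {u : List (Fin 3)} (h : (2 : Fin 3) ∈ u) :
    leeCon k (.ofList u) (.of 2) := by
  obtain ⟨p, q, rfl⟩ := List.append_of_mem h
  rw [FreeMonoid.ofList_append, FreeMonoid.ofList_cons]
  exact ((leeCon k).mul ((leeCon k).refl (FreeMonoid.ofList p))
    (con_two_right k q)).trans (con_two_left k p)

lemma con_altword (k : ℕ) : leeCon k (.ofList (altFrom 0 (2*k+1))) (.of 2) := by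
  have h : FreeMonoid.ofList (altFrom 0 (2*k+1)) = altWord (2*k+1) := by
    unfold altWord altFrom
    congr 1
  rw [h]
  exact ConGen.Rel.of _ _ (Or.inr (Or.inr (Or.inl ⟨rfl, rfl⟩)))

lemma con_infix (k : ℕ) {u : List (Fin 3)} (h : altFrom 0 (2*k+1) <:+: u) :
    leeCon k (.ofList u) (.of 2) := by
  obtain ⟨p, q, rfl⟩ := h
  rw [FreeMonoid.ofList_append, FreeMonoid.ofList_append]
  refine ((leeCon k).mul ((leeCon k).mul ((leeCon k).refl (FreeMonoid.ofList p))
    (con_altword k)) ((leeCon k).refl (FreeMonoid.ofList q))).trans ?_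
  refine ((leeCon k).mul (con_two_left k p) ((leeCon k).refl (FreeMonoid.ofList q))).trans ?_
  exact con_two_right k q

lemma con_destutter (k : ℕ) (u : List (Fin 3)) :
    leeCon k (.ofList u) (.ofList (u.destutter NE3)) := by
  induction u with
  | nil => exact (leeCon k).refl _
  | cons a t ih =>
    cases t with
    | nil => exact (leeCon k).refl _
    | cons b t' =>
      rw [destutter_ne_cons_cons]
      by_cases hab : a = b
      · rw [if_pos hab]
        subst hab
        refine ((leeCon k).trans ?_ ih)
        have : FreeMonoid.ofList (a :: a :: t')
            = FreeMonoid.ofList [a, a] * FreeMonoid.ofList t' := rfl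
        rw [this]
        have h2 : FreeMonoid.ofList (a :: t') = FreeMonoid.ofList [a] * FreeMonoid.ofList t' := rfl
        rw [h2]
        exact (leeCon k).mul (con_sq k a) ((leeCon k).refl _)
      · rw [if_neg hab]
        rw [show FreeMonoid.ofList (a :: b :: t')
          = FreeMonoid.of a * FreeMonoid.ofList (b :: t') from rfl]
        rw [show FreeMonoid.ofList (a :: (b :: t').destutter NE3)
          = FreeMonoid.of a * FreeMonoid.ofList ((b :: t').destutter NE3) from rfl]
        exact (leeCon k).mul ((leeCon k).refl _) ih

lemma con_nf (k : ℕ) (u : List (Fin 3)) : leeCon k (.ofList u) (.ofList (nfL k u)) := by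
  refine ((leeCon k).trans (con_destutter k u) ?_)
  unfold nfL
  split_ifs with h1 h2
  · exact con_mem_two k h1
  · exact con_infix k h2
  · exact (leeCon k).refl _

lemma nf_spec (k : ℕ) (u : List (Fin 3)) :
    nfL k u = [2] ∨ ((nfL k u).Chain' NE3 ∧ (2 : Fin 3) ∉ nfL k u ∧
      ¬ altFrom 0 (2*k+1) <:+: nfL k u) := by
  unfold nfL
  split_ifs with h1 h2
  · exact Or.inl rfl
  · exact Or.inl rfl
  · exact Or.inr ⟨List.isChain_destutter _ _, h1, h2⟩
/-! Flatten helper lemmas -/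

lemma flatten_sublist_flatten {L1 L2 : List (List (Fin 3))} (h : L1 <+ L2) :
    L1.flatten <+ L2.flatten := by
  induction h with
  | slnil => exact List.Sublist.refl _
  | cons l _ ih => exact ih.trans (List.sublist_append_right l _)
  | cons_cons l _ ih => exact (List.Sublist.refl l).append ih

lemma flatten_replicate_sublist {v u : List (Fin 3)} (m : ℕ) (h : v <+ u) :
    (List.replicate m v).flatten <+ (List.replicate m u).flatten := by
  induction m with
  | zero => exact List.Sublist.refl _
  | succ m ih => simpa [List.replicate_succ] using h.append ih

lemma flatten_replicate_length (m : ℕ) (l : List (Fin 3)) :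
    ((List.replicate m l).flatten).length = m * l.length := by
  induction m with
  | zero => simp
  | succ m ih => simp [List.replicate_succ, ih, Nat.succ_mul]; omega

lemma head?_flatten_replicate_pair (m : ℕ) (x y : Fin 3) {z : Fin 3}
    (hz : z ∈ ((List.replicate m [x, y]).flatten).head?) : z = x := by
  cases m with
  | zero => simp at hz
  | succ m => simp [List.replicate_succ] at hz; exact hz.symm

lemma chain'_flatten_replicate_pair {x y : Fin 3} (hxy : x ≠ y) (m : ℕ) :
    ((List.replicate m [x, y]).flatten).Chain' NE3 := by
  induction m with
  | zero => simp [Chain']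
  | succ m ih =>
    rw [List.replicate_succ, List.flatten_cons]
    refine List.isChain_append.mpr ⟨List.isChain_pair.mpr hxy, ih, ?_⟩
    intro a ha b hb
    simp at ha
    subst ha
    have := head?_flatten_replicate_pair m x y hb
    subst this
    exact fun h => hxy h.symm

lemma prod_ofList_flatten {ι : Type*} (s : List ι) (f : ι → List (Fin 3)) :
    (s.map fun i => FreeMonoid.ofList (f i)).prod = FreeMonoid.ofList (s.map f).flatten := by
  induction s with
  | nil => rfl
  | cons i t ih =>
    rw [List.map_cons, List.prod_cons, ih, List.map_cons, List.flatten_cons,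
      FreeMonoid.ofList_append]

lemma reverse_eq_self_of_short {l : List (Fin 3)} (h : l.length ≤ 1) : l.reverse = l := by
  rcases l with _ | ⟨a, _ | ⟨b, m⟩⟩
  · rfl
  · rfl
  · simp at h

lemma reverse_flatten_map {ι : Type*} (s : List ι) (f : ι → List (Fin 3))
    (hf : ∀ i, (f i).length ≤ 1) :
    ((s.reverse.map f).flatten) = (s.map f).flatten.reverse := by
  induction s with
  | nil => rfl
  | cons i t ih =>
    rw [List.reverse_cons, List.map_append, List.flatten_append, ih]
    simp [reverse_eq_self_of_short (hf i)]
/-! Main assembly -/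

lemma f_par_inj {a b : ℕ}
    (h : (if a % 2 = 0 then (0 : Fin 3) else 1) = (if b % 2 = 0 then (0 : Fin 3) else 1)) :
    a % 2 = b % 2 := by
  split_ifs at h <;> simp_all <;> omega

lemma nfL_eq_two_of_rep {k : ℕ} {A : List (Fin 3)} {x y : Fin 3} (hxy : x ≠ y)
    (h2 : (2 : Fin 3) ∉ A) (hsub : (List.replicate (k+1) [x, y]).flatten <+ A) :
    nfL k A = [2] := by
  have hchain := chain'_flatten_replicate_pair hxy (k+1)
  have hlen := length_le_destutter hsub hchain
  rw [flatten_replicate_length] at hlen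
  have h2d : (2 : Fin 3) ∉ A.destutter NE3 := fun h => h2 ((List.destutter_sublist _ _).subset h)
  obtain ⟨σ, hσ⟩ := binary_chain_eq_altFrom (List.isChain_destutter _ _) h2d
  have hinf : altFrom 0 (2*k+1) <:+: A.destutter NE3 := by
    rw [hσ]
    refine altFrom_infix k σ _ (Or.inr ?_)
    simp only [List.length_cons, List.length_nil] at hlen ⊢
    omega
  unfold nfL
  rw [if_neg h2d, if_pos hinf]

lemma nfL_reverse_eq (k : ℕ) {A : List (Fin 3)} (h2 : (2 : Fin 3) ∉ A)
    (hhl : A.head? = A.getLast?) : nfL k A.reverse = nfL k A := by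
  have h2d : (2 : Fin 3) ∉ A.destutter NE3 := fun h => h2 ((List.destutter_sublist _ _).subset h)
  obtain ⟨σ, hσ⟩ := binary_chain_eq_altFrom (List.isChain_destutter _ _) h2d
  have hdd : A.reverse.destutter NE3 = A.destutter NE3 := by
    rw [destutter_reverse]
    rcases hL : (A.destutter NE3).length with _ | M
    · rw [List.length_eq_zero_iff.mp hL]
      rfl
    · have h1 : (A.destutter NE3).head? = (A.destutter NE3).getLast? := by
        rw [head?_destutter, getLast?_destutter, hhl]
      rw [hσ, hL] at h1
      have hh : (altFrom σ (M+1)).head? = some (if σ % 2 = 0 then (0 : Fin 3) else 1) := by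
        rw [altFrom_cons]; rfl
      have hg : (altFrom σ (M+1)).getLast? = some (if (M + σ) % 2 = 0 then (0 : Fin 3) else 1) := by
        rw [altFrom_snoc]; exact List.getLast?_concat
      rw [hh, hg] at h1
      have hmod : σ % 2 = (M + σ) % 2 := f_par_inj (Option.some.injEq _ _ ▸ h1)
      rw [hσ, hL, altFrom_reverse]
      exact altFrom_congr _ (by omega)
  unfold nfL
  rw [hdd]

/-- Let k ≥ 2 and X a word with content {x₁,…,xₙ} in which every variable occurs at
least k − 1 times.  Then L_{2k+1}^1 satisfies
x₁x₂⋯xₙ · X · xₙ⋯x₂x₁ ≈ x₁x₂⋯xₙ · reverse(X) · xₙ⋯x₂x₁. -/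
theorem stmt4 (k : ℕ) (hk : 2 ≤ k) (n : ℕ) (X : List (Fin n))
    (hocc : ∀ i : Fin n, k - 1 ≤ X.count i)
    (θ : Fin n → Lee (2 * k + 1)) :
    (((ascFin n ++ X ++ (ascFin n).reverse).map θ).prod
      = ((ascFin n ++ X.reverse ++ (ascFin n).reverse).map θ).prod) := by
  classical
  have hsurj : ∀ i, ∃ u : FreeMonoid (Fin 3), (leeCon k).mk' u = θ i :=
    fun i => Con.mk'_surjective (θ i)
  choose v hv using hsurj
  set w : Fin n → List (Fin 3) := fun i => nfL k (FreeMonoid.toList (v i)) with hw_def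
  have hw : ∀ i, θ i = (leeCon k).mk' (FreeMonoid.ofList (w i)) := by
    intro i
    rw [← hv i]
    have hcon : leeCon k (v i) (FreeMonoid.ofList (w i)) := con_nf k (FreeMonoid.toList (v i))
    exact (Con.eq _).mpr hcon
  have key : ∀ s : List (Fin n),
      ((s.map θ).prod) = (leeCon k).mk' (FreeMonoid.ofList ((s.map w).flatten)) := by
    intro s
    induction s with
    | nil => exact (map_one ((leeCon k).mk')).symm
    | cons i t ih =>
      rw [List.map_cons, List.prod_cons, ih, hw i]
      have heq : FreeMonoid.ofList (((i :: t).map w).flatten)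
          = FreeMonoid.ofList (w i) * FreeMonoid.ofList ((t.map w).flatten) := by
        rw [List.map_cons, List.flatten_cons, FreeMonoid.ofList_append]
      rw [heq]
      exact (map_mul _ _ _).symm
  rw [key, key]
  suffices hAB : nfL k (((ascFin n ++ X ++ (ascFin n).reverse).map w).flatten)
      = nfL k (((ascFin n ++ X.reverse ++ (ascFin n).reverse).map w).flatten) by
    have h3 : leeCon k
        (FreeMonoid.ofList (nfL k (((ascFin n ++ X ++ (ascFin n).reverse).map w).flatten)))
        (FreeMonoid.ofList (((ascFin n ++ X.reverse ++ (ascFin n).reverse).map w).flatten)) := by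
      rw [hAB]
      exact ((leeCon k).symm (con_nf k _))
    exact (Con.eq _).mpr ((con_nf k _).trans h3)
  set s₁ := ascFin n ++ X ++ (ascFin n).reverse with hs1
  set s₂ := ascFin n ++ X.reverse ++ (ascFin n).reverse with hs2
  have hmemasc : ∀ i : Fin n, i ∈ ascFin n := fun i => by
    simp [ascFin, List.mem_ofFn]
  have hmem1 : ∀ i : Fin n, i ∈ s₁ := fun i =>
    List.mem_append.mpr (Or.inl (List.mem_append.mpr (Or.inl (hmemasc i))))
  have hmem2 : ∀ i : Fin n, i ∈ s₂ := fun i =>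
    List.mem_append.mpr (Or.inl (List.mem_append.mpr (Or.inl (hmemasc i))))
  have hcount : ∀ i : Fin n, k + 1 ≤ s₁.count i ∧ k + 1 ≤ s₂.count i := by
    intro i
    have hasc : (ascFin n).count i = 1 :=
      List.count_eq_one_of_mem ((List.nodup_ofFn).mpr Function.injective_id) (hmemasc i)
    have h1 : s₁.count i = (ascFin n).count i + X.count i + (ascFin n).reverse.count i := by
      rw [hs1, List.count_append, List.count_append]
    have h2 : s₂.count i = (ascFin n).count i + X.reverse.count i + (ascFin n).reverse.count i := by
      rw [hs2, List.count_append, List.count_append]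
    rw [List.count_reverse, hasc] at h1 h2
    rw [List.count_reverse] at h2
    have := hocc i
    omega
  by_cases hc1 : ∃ i, (2 : Fin 3) ∈ w i
  · obtain ⟨i, hi⟩ := hc1
    have h2A : (2 : Fin 3) ∈ (s₁.map w).flatten :=
      List.mem_flatten.mpr ⟨w i, List.mem_map_of_mem (f := w) (hmem1 i), hi⟩
    have h2B : (2 : Fin 3) ∈ (s₂.map w).flatten :=
      List.mem_flatten.mpr ⟨w i, List.mem_map_of_mem (f := w) (hmem2 i), hi⟩
    unfold nfL
    rw [if_pos (mem_destutter_of_mem h2A), if_pos (mem_destutter_of_mem h2B)]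
  · push_neg at hc1
    have h2A : (2 : Fin 3) ∉ (s₁.map w).flatten := by
      intro h
      obtain ⟨l, hl, h2⟩ := List.mem_flatten.mp h
      obtain ⟨i, _, rfl⟩ := List.mem_map.mp hl
      exact hc1 i h2
    have h2B : (2 : Fin 3) ∉ (s₂.map w).flatten := by
      intro h
      obtain ⟨l, hl, h2⟩ := List.mem_flatten.mp h
      obtain ⟨i, _, rfl⟩ := List.mem_map.mp hl
      exact hc1 i h2
    have hch : ∀ i, (w i).Chain' NE3 := by
      intro i
      rcases nf_spec k (FreeMonoid.toList (v i)) with h | ⟨h1, _, _⟩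
      · exact absurd (show (2 : Fin 3) ∈ w i by rw [hw_def]; simp only; rw [h]; simp) (hc1 i)
      · exact h1
    by_cases hc2 : ∃ i, 2 ≤ (w i).length
    · obtain ⟨i, hi⟩ := hc2
      obtain ⟨x, t1, hx⟩ := List.exists_cons_of_ne_nil
        (show w i ≠ [] by intro h; rw [h] at hi; simp at hi)
      obtain ⟨y, t2, hy⟩ := List.exists_cons_of_ne_nil
        (show t1 ≠ [] by intro h; rw [hx, h] at hi; simp at hi)
      have hxy : x ≠ y := by
        have := hch i
        rw [hx, hy] at this
        exact (List.isChain_cons_cons.mp this).1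
      have main : ∀ s : List (Fin n), k + 1 ≤ s.count i → (2 : Fin 3) ∉ (s.map w).flatten →
          nfL k ((s.map w).flatten) = [2] := by
        intro s hs h2s
        apply nfL_eq_two_of_rep hxy h2s
        have hrep : List.replicate (k+1) i <+ s := List.replicate_sublist_iff.mpr hs
        have h1' : List.replicate (k+1) (w i) <+ s.map w := by
          have := hrep.map w
          rwa [List.map_replicate] at this
        refine (flatten_replicate_sublist (k+1) ?_).trans (flatten_sublist_flatten h1')
        rw [hx, hy]
        exact ((List.nil_sublist t2).cons₂ y).cons₂ x
      exact (main s₁ (hcount i).1 h2A).trans (main s₂ (hcount i).2 h2B).symm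
    · push_neg at hc2
      have hlen1 : ∀ i, (w i).length ≤ 1 := fun i => by have := hc2 i; omega
      have hBA : (s₂.map w).flatten = ((s₁.map w).flatten).reverse := by
        have hs21 : s₂ = s₁.reverse := by
          rw [hs1, hs2]
          simp [List.reverse_append, List.append_assoc]
        rw [hs21]
        exact reverse_flatten_map s₁ w hlen1
      rw [hBA]
      refine (nfL_reverse_eq k h2A ?_).symm
      by_cases hA : (s₁.map w).flatten = []
      · rw [hA]; rfl
      · have hP : ((ascFin n).map w).flatten ≠ [] := by
          intro hP0
          apply hA
          have hnil : ∀ i : Fin n, w i = [] := by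
            intro i
            exact (List.flatten_eq_nil_iff.mp hP0) _ (List.mem_map_of_mem (f := w) (hmemasc i))
          apply List.flatten_eq_nil_iff.mpr
          intro l hl
          obtain ⟨i, _, rfl⟩ := List.mem_map.mp hl
          exact hnil i
        obtain ⟨p0, P', hP'⟩ := List.exists_cons_of_ne_nil hP
        have hsplit : (s₁.map w).flatten
            = ((ascFin n).map w).flatten ++ (X.map w).flatten
              ++ (((ascFin n).map w).flatten).reverse := by
          rw [hs1, List.map_append, List.map_append, List.flatten_append, List.flatten_append,
            reverse_flatten_map _ w hlen1]
        have hhead : ((s₁.map w).flatten).head? = some p0 := by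
          rw [hsplit, hP']
          simp
        have hlast : ((s₁.map w).flatten).getLast? = some p0 := by
          rw [hsplit, hP', List.reverse_cons, ← List.append_assoc, List.getLast?_concat]
        rw [hhead, hlast]
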